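/- Let q ≥ 4 be a real number and set κ := 1/(√q − 1). For ρ > 0 define B₁(ρ) := ((q+1)/q)·q^κ · inf{ r^{−ρ/2}·(1+r)·(1+√(qr))^{4κ} : 0 < r ≤ q^{−1/2} }. Then there exists a unique ρ₁ > 0 such that B₁(ρ₁) = q^{ρ₁}·(q+1)/(q−1), and moreover B₁(ρ) < q^{ρ}·(q+1)/(q−1) for every ρ > ρ₁. -/

import Mathlib

open Real Set

namespace Stmt14

noncomputable def S (q κ ρ : ℝ) : ℝ :=
  sInf ((fun r : ℝ => r ^ (-ρ / 2) * (1 + r) * (1 + Real.sqrt (q * r)) ^ (4 * κ)) ''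
    Set.Ioc 0 (q ^ (-(1 : ℝ) / 2)))

noncomputable def M (q κ : ℝ) : ℝ :=
  (1 + q ^ (-(1 : ℝ) / 2)) * (1 + Real.sqrt (q * q ^ (-(1 : ℝ) / 2))) ^ (4 * κ)

noncomputable def Psi (q κ ρ : ℝ) : ℝ := Real.log (S q κ ρ) - ρ / 4 * Real.log q

lemma hr0_mem {q : ℝ} (hq : 4 ≤ q) :
    q ^ (-(1 : ℝ) / 2) ∈ Set.Ioc (0 : ℝ) (q ^ (-(1 : ℝ) / 2)) :=
  ⟨Real.rpow_pos_of_pos (by linarith) _, le_rfl⟩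

lemma r0_pow {q : ℝ} (hq : 4 ≤ q) (ρ : ℝ) :
    (q ^ (-(1 : ℝ) / 2)) ^ (-ρ / 2) = q ^ (ρ / 4) := by
  rw [← Real.rpow_mul (by linarith : (0:ℝ) ≤ q)]
  congr 1; ring

lemma elem_lb {q κ : ℝ} (hq : 4 ≤ q) (hκ0 : 0 ≤ κ) {ρ r : ℝ} (hρ : 0 ≤ ρ)
    (hr : r ∈ Set.Ioc (0 : ℝ) (q ^ (-(1 : ℝ) / 2))) :
    q ^ (ρ / 4) ≤ r ^ (-ρ / 2) * (1 + r) * (1 + Real.sqrt (q * r)) ^ (4 * κ) := by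
  obtain ⟨hr0, hrle⟩ := hr
  have h2 : (q ^ (-(1 : ℝ) / 2)) ^ (-ρ / 2) ≤ r ^ (-ρ / 2) :=
    Real.rpow_le_rpow_of_nonpos hr0 hrle (by linarith)
  rw [r0_pow hq ρ] at h2
  have h3 : (1 : ℝ) ≤ 1 + r := by linarith
  have h4 : (1 : ℝ) ≤ (1 + Real.sqrt (q * r)) ^ (4 * κ) :=
    Real.one_le_rpow (by nlinarith [Real.sqrt_nonneg (q * r)]) (by linarith)
  have h5 : (0 : ℝ) < r ^ (-ρ / 2) := Real.rpow_pos_of_pos hr0 _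
  have h6 : r ^ (-ρ / 2) ≤ r ^ (-ρ / 2) * (1 + r) := le_mul_of_one_le_right h5.le h3
  have h7 : r ^ (-ρ / 2) * (1 + r) ≤ r ^ (-ρ / 2) * (1 + r) * (1 + Real.sqrt (q * r)) ^ (4 * κ) :=
    le_mul_of_one_le_right (by nlinarith) h4
  linarith

lemma S_bdd {q κ : ℝ} (hq : 4 ≤ q) (hκ0 : 0 ≤ κ) {ρ : ℝ} (hρ : 0 ≤ ρ) :
    BddBelow ((fun r : ℝ => r ^ (-ρ / 2) * (1 + r) * (1 + Real.sqrt (q * r)) ^ (4 * κ)) ''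
      Set.Ioc 0 (q ^ (-(1 : ℝ) / 2))) := by
  refine ⟨q ^ (ρ / 4), ?_⟩
  rintro x ⟨r, hr, rfl⟩
  exact elem_lb hq hκ0 hρ hr

lemma S_lb {q κ : ℝ} (hq : 4 ≤ q) (hκ0 : 0 ≤ κ) {ρ : ℝ} (hρ : 0 ≤ ρ) :
    q ^ (ρ / 4) ≤ S q κ ρ := by
  refine le_csInf ⟨_, Set.mem_image_of_mem _ (hr0_mem hq)⟩ ?_
  rintro x ⟨r, hr, rfl⟩
  exact elem_lb hq hκ0 hρ hr

lemma S_pos {q κ : ℝ} (hq : 4 ≤ q) (hκ0 : 0 ≤ κ) {ρ : ℝ} (hρ : 0 ≤ ρ) :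
    0 < S q κ ρ :=
  lt_of_lt_of_le (Real.rpow_pos_of_pos (by linarith) _) (S_lb hq hκ0 hρ)

lemma one_le_M {q κ : ℝ} (hq : 4 ≤ q) (hκ0 : 0 ≤ κ) : 1 ≤ M q κ := by
  have h1 : (0:ℝ) < q ^ (-(1 : ℝ) / 2) := Real.rpow_pos_of_pos (by linarith) _
  have h4 : (1 : ℝ) ≤ (1 + Real.sqrt (q * q ^ (-(1 : ℝ) / 2))) ^ (4 * κ) :=
    Real.one_le_rpow (by nlinarith [Real.sqrt_nonneg (q * q ^ (-(1 : ℝ) / 2))]) (by linarith)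
  have h3 : (1 : ℝ) ≤ 1 + q ^ (-(1 : ℝ) / 2) := by linarith
  rw [M]
  nlinarith

lemma S_ub {q κ : ℝ} (hq : 4 ≤ q) (hκ0 : 0 ≤ κ) {ρ : ℝ} (hρ : 0 ≤ ρ) :
    S q κ ρ ≤ q ^ (ρ / 4) * M q κ := by
  have h := csInf_le (S_bdd hq hκ0 hρ) (Set.mem_image_of_mem _ (hr0_mem hq))
  calc S q κ ρ ≤ (q ^ (-(1:ℝ)/2)) ^ (-ρ / 2) * (1 + q ^ (-(1:ℝ)/2)) *
        (1 + Real.sqrt (q * q ^ (-(1:ℝ)/2))) ^ (4 * κ) := h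
    _ = q ^ (ρ / 4) * M q κ := by rw [r0_pow hq ρ, M, mul_assoc]

lemma S_concave {q κ : ℝ} (hq : 4 ≤ q) (hκ0 : 0 ≤ κ) {a c t : ℝ}
    (ha : 0 ≤ a) (hc : 0 ≤ c) (ht0 : 0 ≤ t) (ht1 : t ≤ 1) :
    S q κ a ^ (1 - t) * S q κ c ^ t ≤ S q κ ((1 - t) * a + t * c) := by
  refine le_csInf ⟨_, Set.mem_image_of_mem _ (hr0_mem hq)⟩ ?_
  rintro x ⟨r, hr, rfl⟩
  obtain ⟨hr0, hrle⟩ := hr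
  set X := (1 + Real.sqrt (q * r)) ^ (4 * κ) with hX
  have hXpos : 0 < X := Real.rpow_pos_of_pos (by nlinarith [Real.sqrt_nonneg (q * r)]) _
  have hGpos : (0:ℝ) < (1 + r) * X := mul_pos (by linarith) hXpos
  have hSa : S q κ a ≤ r ^ (-a / 2) * ((1 + r) * X) := by
    have h := csInf_le (S_bdd hq hκ0 ha) (Set.mem_image_of_mem _ (⟨hr0, hrle⟩ :
      r ∈ Set.Ioc (0:ℝ) (q ^ (-(1:ℝ)/2))))
    calc S q κ a ≤ r ^ (-a / 2) * (1 + r) * X := h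
      _ = r ^ (-a / 2) * ((1 + r) * X) := mul_assoc _ _ _
  have hSc : S q κ c ≤ r ^ (-c / 2) * ((1 + r) * X) := by
    have h := csInf_le (S_bdd hq hκ0 hc) (Set.mem_image_of_mem _ (⟨hr0, hrle⟩ :
      r ∈ Set.Ioc (0:ℝ) (q ^ (-(1:ℝ)/2))))
    calc S q κ c ≤ r ^ (-c / 2) * (1 + r) * X := h
      _ = r ^ (-c / 2) * ((1 + r) * X) := mul_assoc _ _ _
  have hSa0 : 0 ≤ S q κ a := (S_pos hq hκ0 ha).le
  have hSc0 : 0 ≤ S q κ c := (S_pos hq hκ0 hc).le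
  have A1 : (r ^ (-a / 2) * ((1 + r) * X)) ^ (1 - t)
      = r ^ (-a / 2 * (1 - t)) * ((1 + r) * X) ^ (1 - t) := by
    rw [Real.mul_rpow (Real.rpow_nonneg hr0.le _) hGpos.le, ← Real.rpow_mul hr0.le]
  have A2 : (r ^ (-c / 2) * ((1 + r) * X)) ^ t
      = r ^ (-c / 2 * t) * ((1 + r) * X) ^ t := by
    rw [Real.mul_rpow (Real.rpow_nonneg hr0.le _) hGpos.le, ← Real.rpow_mul hr0.le]
  have A3 : r ^ (-a / 2 * (1 - t)) * r ^ (-c / 2 * t)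
      = r ^ (-((1 - t) * a + t * c) / 2) := by
    rw [← Real.rpow_add hr0]; congr 1; ring
  have A4 : ((1 + r) * X) ^ (1 - t) * ((1 + r) * X) ^ t = (1 + r) * X := by
    rw [← Real.rpow_add hGpos, show (1 - t) + t = (1:ℝ) by ring, Real.rpow_one]
  calc S q κ a ^ (1 - t) * S q κ c ^ t
      ≤ (r ^ (-a / 2) * ((1 + r) * X)) ^ (1 - t) * (r ^ (-c / 2) * ((1 + r) * X)) ^ t := by
        apply mul_le_mul (Real.rpow_le_rpow hSa0 hSa (by linarith))
          (Real.rpow_le_rpow hSc0 hSc ht0) (Real.rpow_nonneg hSc0 _)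
          (Real.rpow_nonneg (by positivity) _)
    _ = (r ^ (-a / 2 * (1 - t)) * r ^ (-c / 2 * t)) *
          (((1 + r) * X) ^ (1 - t) * ((1 + r) * X) ^ t) := by rw [A1, A2]; ring
    _ = r ^ (-((1 - t) * a + t * c) / 2) * ((1 + r) * X) := by rw [A3, A4]
    _ = r ^ (-((1 - t) * a + t * c) / 2) * (1 + r) * X := by ring


lemma Psi_nonneg {q κ : ℝ} (hq : 4 ≤ q) (hκ0 : 0 ≤ κ) {ρ : ℝ} (hρ : 0 ≤ ρ) :
    0 ≤ Psi q κ ρ := by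
  have h := (Real.log_le_log_iff (Real.rpow_pos_of_pos (by linarith : (0:ℝ) < q) _)
    (S_pos hq hκ0 hρ)).mpr (S_lb hq hκ0 hρ)
  rw [Real.log_rpow (by linarith : (0:ℝ) < q)] at h
  rw [Psi]; linarith

lemma Psi_le {q κ : ℝ} (hq : 4 ≤ q) (hκ0 : 0 ≤ κ) {ρ : ℝ} (hρ : 0 ≤ ρ) :
    Psi q κ ρ ≤ Real.log (M q κ) := by
  have hMpos : (0:ℝ) < M q κ := lt_of_lt_of_le one_pos (one_le_M hq hκ0)
  have hqp : (0:ℝ) < q ^ (ρ / 4) := Real.rpow_pos_of_pos (by linarith) _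
  have h := (Real.log_le_log_iff (S_pos hq hκ0 hρ) (by positivity)).mpr (S_ub hq hκ0 hρ)
  rw [Real.log_mul hqp.ne' hMpos.ne', Real.log_rpow (by linarith : (0:ℝ) < q)] at h
  rw [Psi]; linarith

lemma Psi_concave {q κ : ℝ} (hq : 4 ≤ q) (hκ0 : 0 ≤ κ) {a c t : ℝ}
    (ha : 0 ≤ a) (hc : 0 ≤ c) (ht0 : 0 ≤ t) (ht1 : t ≤ 1) :
    (1 - t) * Psi q κ a + t * Psi q κ c ≤ Psi q κ ((1 - t) * a + t * c) := by
  have hSa := S_pos hq hκ0 ha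
  have hSc := S_pos hq hκ0 hc
  have hSb := S_pos hq hκ0 (add_nonneg (mul_nonneg (by linarith : (0:ℝ) ≤ 1 - t) ha) (mul_nonneg ht0 hc))
  have h1 : Real.log (S q κ a ^ (1 - t) * S q κ c ^ t) ≤ Real.log (S q κ ((1 - t) * a + t * c)) :=
    (Real.log_le_log_iff (mul_pos (Real.rpow_pos_of_pos hSa _) (Real.rpow_pos_of_pos hSc _))
      hSb).mpr (S_concave hq hκ0 ha hc ht0 ht1)
  rw [Real.log_mul (Real.rpow_pos_of_pos hSa _).ne' (Real.rpow_pos_of_pos hSc _).ne',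
    Real.log_rpow hSa, Real.log_rpow hSc] at h1
  have hring : (1 - t) * (a / 4 * Real.log q) + t * (c / 4 * Real.log q)
      = ((1 - t) * a + t * c) / 4 * Real.log q := by ring
  simp only [Psi]; linarith

lemma Psi_left {q κ : ℝ} (hq : 4 ≤ q) (hκ0 : 0 ≤ κ) {x y : ℝ} (hx : 0 ≤ x) (hxy : x ≤ y) :
    Psi q κ x - Psi q κ y ≤ (y - x) * Real.log (M q κ) := by
  set m := Real.log (M q κ) with hm
  have hm0 : 0 ≤ m := Real.log_nonneg (one_le_M hq hκ0)
  set t := (y - x) / (y + 1 - x) with ht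
  have hden : (0:ℝ) < y + 1 - x := by linarith
  have ht0 : 0 ≤ t := div_nonneg (by linarith) hden.le
  have ht1 : t ≤ 1 := (div_le_one hden).mpr (by linarith)
  have htle : t ≤ y - x := div_le_self (by linarith) (by linarith)
  have hb : (1 - t) * x + t * (y + 1) = y := by rw [ht]; field_simp; ring
  have hconc := Psi_concave hq hκ0 hx (show (0:ℝ) ≤ y + 1 by linarith) ht0 ht1
  rw [hb] at hconc
  have h1 : 0 ≤ Psi q κ (y + 1) := Psi_nonneg hq hκ0 (by linarith)
  have h2 : Psi q κ x ≤ m := Psi_le hq hκ0 hx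
  have h3 : 0 ≤ Psi q κ x := Psi_nonneg hq hκ0 hx
  nlinarith [mul_le_mul_of_nonneg_left h2 ht0, mul_le_mul_of_nonneg_right htle hm0,
    mul_nonneg ht0 h1]

lemma Psi_right {q κ : ℝ} (hq : 4 ≤ q) (hκ0 : 0 ≤ κ) {x y : ℝ} (hx : 0 < x) (hxy : x ≤ y) :
    Psi q κ y - Psi q κ x ≤ (y - x) * Real.log (M q κ) / x := by
  set m := Real.log (M q κ) with hm
  have hm0 : 0 ≤ m := Real.log_nonneg (one_le_M hq hκ0)
  have hy : (0:ℝ) < y := lt_of_lt_of_le hx hxy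
  set s := x / y with hs
  have hs0 : 0 ≤ s := div_nonneg hx.le hy.le
  have hs1 : s ≤ 1 := (div_le_one hy).mpr hxy
  have hb : (1 - s) * 0 + s * y = x := by rw [hs]; field_simp; ring
  have hconc := Psi_concave hq hκ0 (le_refl (0:ℝ)) hy.le hs0 hs1
  rw [hb] at hconc
  have h0 : 0 ≤ Psi q κ 0 := Psi_nonneg hq hκ0 le_rfl
  have h2 : Psi q κ x ≤ m := Psi_le hq hκ0 hx.le
  have h3 : 0 ≤ Psi q κ y := Psi_nonneg hq hκ0 hy.le
  rw [le_div_iff₀ hx]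
  -- (Psi y - Psi x) * x ≤ (y - x) * m
  have hxyP : x * Psi q κ y ≤ y * Psi q κ x := by
    have h4 : s * Psi q κ y ≤ Psi q κ x := by nlinarith [mul_nonneg (show (0:ℝ) ≤ 1 - s by linarith) h0]
    have h5 := mul_le_mul_of_nonneg_right h4 hy.le
    have h6 : s * Psi q κ y * y = x * Psi q κ y := by rw [hs]; field_simp
    nlinarith
  nlinarith [mul_le_mul_of_nonneg_left h2 (show (0:ℝ) ≤ y - x by linarith)]

lemma Psi_cont {q κ : ℝ} (hq : 4 ≤ q) (hκ0 : 0 ≤ κ) {a b : ℝ} (ha : 0 < a) :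
    ContinuousOn (fun ρ => Psi q κ ρ) (Set.Icc a b) := by
  have hm0 : 0 ≤ Real.log (M q κ) := Real.log_nonneg (one_le_M hq hκ0)
  set m := Real.log (M q κ) with hm
  have hK0 : (0:ℝ) ≤ m * (1 + 1 / a) := by positivity
  have key : ∀ u ∈ Set.Icc a b, ∀ v ∈ Set.Icc a b, u ≤ v →
      |Psi q κ u - Psi q κ v| ≤ m * (1 + 1 / a) * |u - v| := by
    intro u hu v hv huv
    have hua : a ≤ u := hu.1
    have h1 : Psi q κ u - Psi q κ v ≤ (v - u) * m := Psi_left hq hκ0 (by linarith) huv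
    have h2 : Psi q κ v - Psi q κ u ≤ (v - u) * m / u := Psi_right hq hκ0 (by linarith) huv
    have h3 : (v - u) * m / u ≤ (v - u) * m / a :=
      div_le_div_of_nonneg_left (mul_nonneg (by linarith) hm0) ha hua
    have e1 : m * (1 + 1 / a) * (v - u) = m * (v - u) + (v - u) * m / a := by
      field_simp
    have e2 : 0 ≤ m * (v - u) := mul_nonneg hm0 (by linarith)
    have e3 : 0 ≤ (v - u) * m / a := div_nonneg (mul_nonneg (by linarith) hm0) ha.le
    have habs : |u - v| = v - u := by rw [abs_of_nonpos (by linarith)]; ring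
    rw [habs, abs_le]
    constructor
    · linarith
    · linarith
  have hlip : LipschitzOnWith (Real.toNNReal (m * (1 + 1 / a)))
      (fun ρ => Psi q κ ρ) (Set.Icc a b) := by
    rw [lipschitzOnWith_iff_dist_le_mul]
    intro x hx y hy
    rw [Real.dist_eq, Real.dist_eq, Real.coe_toNNReal _ hK0]
    rcases le_total x y with h | h
    · exact key x hx y hy h
    · have := key y hy x hx h
      rw [abs_sub_comm (Psi q κ y), abs_sub_comm y x] at this
      exact this
  exact hlip.continuousOn


noncomputable def Fq (q κ ρ : ℝ) : ℝ :=
  (Real.log ((q + 1) / q) - Real.log ((q + 1) / (q - 1)) + κ * Real.log q)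
    + Psi q κ ρ - 3 / 4 * ρ * Real.log q

lemma Fq_concave {q κ : ℝ} (hq : 4 ≤ q) (hκ0 : 0 ≤ κ) {a c t : ℝ}
    (ha : 0 ≤ a) (hc : 0 ≤ c) (ht0 : 0 ≤ t) (ht1 : t ≤ 1) :
    (1 - t) * Fq q κ a + t * Fq q κ c ≤ Fq q κ ((1 - t) * a + t * c) := by
  have h := Psi_concave hq hκ0 ha hc ht0 ht1
  have hring : (1 - t) * (3 / 4 * a * Real.log q) + t * (3 / 4 * c * Real.log q)
      = 3 / 4 * ((1 - t) * a + t * c) * Real.log q := by ring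
  simp only [Fq]
  linarith

lemma Fq_eq_log {q κ : ℝ} (hq : 4 ≤ q) (hκ0 : 0 ≤ κ) {ρ : ℝ} (hρ : 0 ≤ ρ) :
    Fq q κ ρ = Real.log ((q + 1) / q * q ^ κ * S q κ ρ)
      - Real.log (q ^ ρ * (q + 1) / (q - 1)) := by
  have hq0 : (0:ℝ) < q := by linarith
  have hS := S_pos hq hκ0 hρ
  have h1 : ((q + 1) / q : ℝ) ≠ 0 := ne_of_gt (by positivity)
  have h2 : (q:ℝ) ^ κ ≠ 0 := (Real.rpow_pos_of_pos hq0 _).ne'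
  have h3 : (q:ℝ) ^ ρ ≠ 0 := (Real.rpow_pos_of_pos hq0 _).ne'
  have h4 : (q:ℝ) + 1 ≠ 0 := by positivity
  have h5 : (q:ℝ) - 1 ≠ 0 := ne_of_gt (by linarith)
  rw [Fq, Psi, Real.log_mul (mul_ne_zero h1 h2) hS.ne', Real.log_mul h1 h2,
    Real.log_rpow hq0, Real.log_div (mul_ne_zero h3 h4) h5, Real.log_mul h3 h4,
    Real.log_rpow hq0, Real.log_div h4 h5]
  ring

end Stmt14


/-- Existence and uniqueness of the threshold `ρ₁ = ρ₁(q)` of Theorem 2: with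
`κ = 1/(√q − 1)` and
`B₁(ρ) = ((q+1)/q)·q^κ·inf{ r^{−ρ/2}(1+r)(1+√(qr))^{4κ} : 0 < r ≤ q^{−1/2} }`,
there is a unique `ρ₁ > 0` with `B₁(ρ₁) = q^{ρ₁}·(q+1)/(q−1)`, and
`B₁(ρ) < q^ρ·(q+1)/(q−1)` for all `ρ > ρ₁`. -/
theorem stmt_14 (q : ℝ) (hq : 4 ≤ q) (κ : ℝ) (hκ : κ = 1 / (Real.sqrt q - 1))
    (B₁ : ℝ → ℝ)
    (hB₁ : ∀ ρ : ℝ, B₁ ρ = (q + 1) / q * q ^ κ *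
      sInf ((fun r : ℝ =>
          r ^ (-ρ / 2) * (1 + r) * (1 + Real.sqrt (q * r)) ^ (4 * κ)) ''
        Set.Ioc 0 (q ^ (-(1 : ℝ) / 2)))) :
    ∃ ρ₁ : ℝ, 0 < ρ₁ ∧ B₁ ρ₁ = q ^ ρ₁ * (q + 1) / (q - 1) ∧
      (∀ ρ : ℝ, 0 < ρ → B₁ ρ = q ^ ρ * (q + 1) / (q - 1) → ρ = ρ₁) ∧
      (∀ ρ : ℝ, ρ₁ < ρ → B₁ ρ < q ^ ρ * (q + 1) / (q - 1)) := by
  have hq0 : (0:ℝ) < q := by linarith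
  have hsq2 : (2:ℝ) ≤ Real.sqrt q := by
    have h4 : Real.sqrt 4 ≤ Real.sqrt q := Real.sqrt_le_sqrt hq
    rwa [show (4:ℝ) = 2 ^ 2 by norm_num, Real.sqrt_sq (by norm_num : (0:ℝ) ≤ 2)] at h4
  have hκpos : 0 < κ := by rw [hκ]; exact div_pos one_pos (by linarith)
  have hκ0 : 0 ≤ κ := hκpos.le
  have hL1 : 1 ≤ Real.log q := by
    have h4 : Real.log 4 ≤ Real.log q := (Real.log_le_log_iff (by norm_num) hq0).mpr hq
    have h5 : (1:ℝ) < Real.log 4 := by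
      rw [show (4:ℝ) = 2 ^ 2 by norm_num, Real.log_pow]
      push_cast
      nlinarith [Real.log_two_gt_d9]
    linarith
  obtain ⟨L, hLdef⟩ : ∃ x : ℝ, x = Real.log q := ⟨_, rfl⟩
  rw [← hLdef] at hL1
  have hL0 : 0 < L := by linarith
  obtain ⟨m, hmdef⟩ : ∃ x : ℝ, x = Real.log (Stmt14.M q κ) := ⟨_, rfl⟩
  have hm0 : 0 ≤ m := by
    have := Real.log_nonneg (Stmt14.one_le_M hq hκ0)
    rwa [← hmdef] at this
  obtain ⟨e₀, he₀def⟩ : ∃ x : ℝ,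
    x = Real.log ((q + 1) / q) - Real.log ((q + 1) / (q - 1)) + κ * L := ⟨_, rfl⟩
  have he₀ : 0 < e₀ := by
    have h4 : (q:ℝ) + 1 ≠ 0 := by positivity
    have h5 : (q:ℝ) - 1 ≠ 0 := ne_of_gt (by linarith)
    have hq' : (q:ℝ) ≠ 0 := hq0.ne'
    have hlog1 : Real.log ((q + 1) / q) = Real.log (q + 1) - Real.log q := Real.log_div h4 hq'
    have hlog2 : Real.log ((q + 1) / (q - 1)) = Real.log (q + 1) - Real.log (q - 1) :=
      Real.log_div h4 h5
    have hlt : Real.log q - Real.log (q - 1) ≤ 1 / (q - 1) := by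
      have hpos : (0:ℝ) < q / (q - 1) := div_pos hq0 (by linarith)
      have h := Real.log_le_sub_one_of_pos hpos
      rw [Real.log_div hq' h5] at h
      have he : q / (q - 1) - 1 = 1 / (q - 1) := by field_simp; ring
      linarith
    have hsqq : Real.sqrt q < q := by nlinarith [Real.sq_sqrt hq0.le]
    have hκgt : 1 / (q - 1) < κ := by
      rw [hκ]
      exact one_div_lt_one_div_of_lt (by linarith) (by linarith)
    rw [he₀def, hlog1, hlog2, hLdef]
    have hLq : 1 ≤ Real.log q := by rw [← hLdef]; exact hL1
    have hκL : κ ≤ κ * Real.log q := le_mul_of_one_le_right hκ0 hLq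
    linarith
  have hFlb : ∀ ρ : ℝ, 0 ≤ ρ → e₀ - 3 / 4 * ρ * L ≤ Stmt14.Fq q κ ρ := by
    intro ρ hρ
    have h := Stmt14.Psi_nonneg hq hκ0 hρ
    have hFq : Stmt14.Fq q κ ρ = (Real.log ((q + 1) / q) - Real.log ((q + 1) / (q - 1))
        + κ * Real.log q) + Stmt14.Psi q κ ρ - 3 / 4 * ρ * Real.log q := rfl
    rw [hFq, ← hLdef, ← he₀def]
    linarith
  have hFub : ∀ ρ : ℝ, 0 ≤ ρ → Stmt14.Fq q κ ρ ≤ e₀ + m - 3 / 4 * ρ * L := by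
    intro ρ hρ
    have h := Stmt14.Psi_le hq hκ0 hρ
    rw [← hmdef] at h
    have hFq : Stmt14.Fq q κ ρ = (Real.log ((q + 1) / q) - Real.log ((q + 1) / (q - 1))
        + κ * Real.log q) + Stmt14.Psi q κ ρ - 3 / 4 * ρ * Real.log q := rfl
    rw [hFq, ← hLdef, ← he₀def]
    linarith
  obtain ⟨ρa, hρadef⟩ : ∃ x : ℝ, x = 2 * e₀ / (3 * L) := ⟨_, rfl⟩
  have hρa0 : 0 < ρa := by rw [hρadef]; exact div_pos (by linarith) (by linarith)
  have hFρa : 0 < Stmt14.Fq q κ ρa := by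
    have h := hFlb ρa hρa0.le
    have he : 3 / 4 * ρa * L = e₀ / 2 := by
      rw [hρadef]; field_simp; ring
    linarith
  obtain ⟨ρb, hρbdef⟩ : ∃ x : ℝ, x = 4 * (e₀ + m) / (3 * L) + 1 := ⟨_, rfl⟩
  have hρab : ρa ≤ ρb := by
    rw [hρadef, hρbdef]
    have h1 : 2 * e₀ / (3 * L) ≤ 4 * (e₀ + m) / (3 * L) := by
      rw [div_le_div_iff₀ (by linarith) (by linarith)]
      nlinarith
    linarith
  have hFρb : Stmt14.Fq q κ ρb < 0 := by
    have h := hFub ρb (by linarith)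
    have he : 3 / 4 * ρb * L = (e₀ + m) + 3 / 4 * L := by
      rw [hρbdef]; field_simp
    linarith
  have hcont : ContinuousOn (Stmt14.Fq q κ) (Set.Icc ρa ρb) := by
    have h1 := Stmt14.Psi_cont (q := q) (κ := κ) hq hκ0 (b := ρb) hρa0
    have h2 : Continuous (fun ρ : ℝ => 3 / 4 * ρ * Real.log q) := by fun_prop
    exact (continuousOn_const.add h1).sub h2.continuousOn
  obtain ⟨ρ₁, hρ₁mem, hρ₁0⟩ := intermediate_value_Icc' hρab hcont
    (Set.mem_Icc.mpr ⟨hFρb.le, hFρa.le⟩)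
  have hρ₁a : ρa < ρ₁ := by
    rcases lt_or_eq_of_le hρ₁mem.1 with h | h
    · exact h
    · exfalso; rw [← h] at hρ₁0; exact hFρa.ne' hρ₁0
  have hroots : ∀ ρ : ℝ, 0 ≤ ρ → Stmt14.Fq q κ ρ = 0 → ρa < ρ := by
    intro ρ hρ h0
    have h := hFlb ρ hρ
    rw [hρadef, div_lt_iff₀ (by linarith : (0:ℝ) < 3 * L)]
    nlinarith
  have hcross : ∀ b c : ℝ, ρa < b → b < c → Stmt14.Fq q κ b = 0 → Stmt14.Fq q κ c < 0 := by
    intro b c hab hbc hb0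
    have hca : (0:ℝ) < c - ρa := by linarith
    obtain ⟨t, htdef⟩ : ∃ x : ℝ, x = (b - ρa) / (c - ρa) := ⟨_, rfl⟩
    have ht0 : 0 < t := by rw [htdef]; exact div_pos (by linarith) hca
    have ht1 : t < 1 := by rw [htdef, div_lt_one hca]; linarith
    have hbrep : (1 - t) * ρa + t * c = b := by
      rw [htdef]; field_simp; ring
    have hconc := Stmt14.Fq_concave hq hκ0 hρa0.le (show (0:ℝ) ≤ c by linarith) ht0.le ht1.le
    rw [hbrep, hb0] at hconc
    by_contra hFc
    push_neg at hFc
    nlinarith [mul_pos (show (0:ℝ) < 1 - t by linarith) hFρa, mul_nonneg ht0.le hFc]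
  have hRpos : ∀ ρ : ℝ, 0 < q ^ ρ * (q + 1) / (q - 1) := fun ρ =>
    div_pos (mul_pos (Real.rpow_pos_of_pos hq0 ρ) (by linarith)) (by linarith)
  have hBeq : ∀ ρ : ℝ, 0 ≤ ρ →
      Stmt14.Fq q κ ρ = Real.log (B₁ ρ) - Real.log (q ^ ρ * (q + 1) / (q - 1)) := by
    intro ρ hρ
    rw [hB₁ ρ]
    exact Stmt14.Fq_eq_log hq hκ0 hρ
  have hBpos : ∀ ρ : ℝ, 0 ≤ ρ → 0 < B₁ ρ := by
    intro ρ hρ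
    rw [hB₁ ρ]
    have hS := Stmt14.S_pos hq hκ0 hρ
    exact mul_pos (mul_pos (by positivity) (Real.rpow_pos_of_pos hq0 κ)) hS
  have hiff : ∀ ρ : ℝ, 0 ≤ ρ →
      (B₁ ρ = q ^ ρ * (q + 1) / (q - 1) ↔ Stmt14.Fq q κ ρ = 0) := by
    intro ρ hρ
    rw [hBeq ρ hρ]
    constructor
    · intro h; rw [h]; exact sub_self _
    · intro h
      have h' : Real.log (B₁ ρ) = Real.log (q ^ ρ * (q + 1) / (q - 1)) := by linarith
      exact Real.log_injOn_pos (Set.mem_Ioi.mpr (hBpos ρ hρ)) (Set.mem_Ioi.mpr (hRpos ρ)) h'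
  have hlt : ∀ ρ : ℝ, 0 ≤ ρ → Stmt14.Fq q κ ρ < 0 → B₁ ρ < q ^ ρ * (q + 1) / (q - 1) := by
    intro ρ hρ h
    rw [hBeq ρ hρ] at h
    exact (Real.log_lt_log_iff (hBpos ρ hρ) (hRpos ρ)).mp (by linarith)
  refine ⟨ρ₁, by linarith, (hiff ρ₁ (by linarith)).mpr hρ₁0, ?_, ?_⟩
  · intro ρ hρpos hBe
    have hF : Stmt14.Fq q κ ρ = 0 := (hiff ρ hρpos.le).mp hBe
    have hρa' : ρa < ρ := hroots ρ hρpos.le hF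
    rcases lt_trichotomy ρ ρ₁ with h | h | h
    · exact absurd hρ₁0 (ne_of_lt (hcross ρ ρ₁ hρa' h hF))
    · exact h
    · exact absurd hF (ne_of_lt (hcross ρ₁ ρ hρ₁a h hρ₁0))
  · intro ρ hρ
    exact hlt ρ (by linarith) (hcross ρ₁ ρ hρ₁a hρ hρ₁0)
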